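/- arXiv:1010.2712 — 2 statements merged into one kernel-verified Lean document; each statement's English description precedes it below -/
import Mathlib

section
/- Let n ≥ 3 be an integer. There exist half-integers t1, t2, t3 ∈ (1/2)ℤ with t1·t2·t3 ≠ 0 satisfying s(t1)·t1^n = s(t2)·t2^n + s(t3)·t3^n if and only if there exist positive integers a, b, c with a^n + b^n = c^n. -/
/-- A rational number `t` is a half-integer when `2 * t` is an integer. -/
def IsHalfInteger (t : ℚ) : Prop := ∃ m : ℤ, (m : ℚ) = 2 * t

open Classical in
/-- The sign `s(t)` of a half-integer: `1` if `t` is an integer and `-1`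
if `t` is a non-integer half-integer. -/
noncomputable def halfIntSign (t : ℚ) : ℚ :=
  if ∃ m : ℤ, (m : ℚ) = t then 1 else -1

lemma halfIntSign_eq_or (t : ℚ) : halfIntSign t = 1 ∨ halfIntSign t = -1 := by
  unfold halfIntSign; split <;> simp

lemma halfIntSign_intCast (k : ℤ) : halfIntSign (k : ℚ) = 1 := if_pos ⟨k, rfl⟩

lemma natAbs_tri (x y z : ℤ) (h : x = y + z) :
    x.natAbs = y.natAbs + z.natAbs ∨ y.natAbs = x.natAbs + z.natAbs ∨
    z.natAbs = x.natAbs + y.natAbs := by omega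

theorem halfinteger_fermat_iff_integer_fermat :
    ∀ n : ℕ, 3 ≤ n →
      ((∃ t1 t2 t3 : ℚ, IsHalfInteger t1 ∧ IsHalfInteger t2 ∧ IsHalfInteger t3 ∧
          t1 * t2 * t3 ≠ 0 ∧
          halfIntSign t1 * t1 ^ n = halfIntSign t2 * t2 ^ n + halfIntSign t3 * t3 ^ n)
        ↔ (∃ a b c : ℕ, 0 < a ∧ 0 < b ∧ 0 < c ∧ a ^ n + b ^ n = c ^ n)) := by
  intro n _
  constructor
  · rintro ⟨t1, t2, t3, ⟨m1, hm1⟩, ⟨m2, hm2⟩, ⟨m3, hm3⟩, hne, heq⟩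
    have ht1 : t1 ≠ 0 := fun h => hne (by simp [h])
    have ht2 : t2 ≠ 0 := fun h => hne (by simp [h])
    have ht3 : t3 ≠ 0 := fun h => hne (by simp [h])
    have hm1' : m1 ≠ 0 := by
      rintro rfl; apply ht1; field_simp at hm1; push_cast at hm1; linarith
    have hm2' : m2 ≠ 0 := by
      rintro rfl; apply ht2; field_simp at hm2; push_cast at hm2; linarith
    have hm3' : m3 ≠ 0 := by
      rintro rfl; apply ht3; field_simp at hm3; push_cast at hm3; linarith
    have hsgn : ∀ t : ℚ, ∃ ε : ℤ, (ε = 1 ∨ ε = -1) ∧ (ε : ℚ) = halfIntSign t := by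
      intro t
      rcases halfIntSign_eq_or t with h | h
      · exact ⟨1, Or.inl rfl, by simp [h]⟩
      · exact ⟨-1, Or.inr rfl, by simp [h]⟩
    obtain ⟨ε1, hε1, he1⟩ := hsgn t1
    obtain ⟨ε2, hε2, he2⟩ := hsgn t2
    obtain ⟨ε3, hε3, he3⟩ := hsgn t3
    have key : (ε1 * m1 ^ n : ℤ) = ε2 * m2 ^ n + ε3 * m3 ^ n := by
      have : ((ε1 * m1 ^ n : ℤ) : ℚ) = ((ε2 * m2 ^ n + ε3 * m3 ^ n : ℤ) : ℚ) := by
        push_cast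
        rw [he1, he2, he3, hm1, hm2, hm3]
        rw [mul_pow, mul_pow, mul_pow]
        ring_nf
        linear_combination (2 : ℚ) ^ n * heq
      exact_mod_cast this
    have habs : ∀ (ε m : ℤ), (ε = 1 ∨ ε = -1) → (ε * m ^ n).natAbs = m.natAbs ^ n := by
      rintro ε m (rfl | rfl) <;> simp [Int.natAbs_pow]
    have h1 := habs ε1 m1 hε1
    have h2 := habs ε2 m2 hε2
    have h3 := habs ε3 m3 hε3
    have hp1 : 0 < m1.natAbs := Int.natAbs_pos.mpr hm1'
    have hp2 : 0 < m2.natAbs := Int.natAbs_pos.mpr hm2'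
    have hp3 : 0 < m3.natAbs := Int.natAbs_pos.mpr hm3'
    rcases natAbs_tri _ _ _ key with h | h | h
    · exact ⟨m2.natAbs, m3.natAbs, m1.natAbs, hp2, hp3, hp1, by
        rw [h1, h2, h3] at h; omega⟩
    · exact ⟨m1.natAbs, m3.natAbs, m2.natAbs, hp1, hp3, hp2, by
        rw [h1, h2, h3] at h; omega⟩
    · exact ⟨m1.natAbs, m2.natAbs, m3.natAbs, hp1, hp2, hp3, by
        rw [h1, h2, h3] at h; omega⟩
  · rintro ⟨a, b, c, ha, hb, hc, habc⟩
    refine ⟨(c : ℚ), (a : ℚ), (b : ℚ), ⟨2 * c, by push_cast; ring⟩,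
      ⟨2 * a, by push_cast; ring⟩, ⟨2 * b, by push_cast; ring⟩, ?_, ?_⟩
    · positivity
    · have h1 : halfIntSign ((c : ℕ) : ℚ) = 1 := by
        exact_mod_cast halfIntSign_intCast (c : ℤ)
      have h2 : halfIntSign ((a : ℕ) : ℚ) = 1 := by
        exact_mod_cast halfIntSign_intCast (a : ℤ)
      have h3 : halfIntSign ((b : ℕ) : ℚ) = 1 := by
        exact_mod_cast halfIntSign_intCast (b : ℤ)
      rw [h1, h2, h3, one_mul, one_mul, one_mul]
      have : (a : ℚ) ^ n + (b : ℚ) ^ n = (c : ℚ) ^ n := by exact_mod_cast habc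
      linarith
end

section
/- The exponential map of the quaternions is surjective onto the nonzero quaternions: for every quaternion q ≠ 0 there exists a quaternion p with exp(p) = q. -/
open Quaternion

noncomputable def qi : ℍ[ℝ] := ⟨0,1,0,0⟩

theorem quaternion_exp_surjective_onto_nonzero (q : ℍ[ℝ]) (hq : q ≠ 0) :
    ∃ p : ℍ[ℝ], NormedSpace.exp p = q := by
  have hr : (0:ℝ) < ‖q‖ := norm_pos_iff.mpr hq
  have hkey : q.re ^ 2 + ‖q.im‖ ^ 2 = ‖q‖ ^ 2 := by
    have h1 : ‖q‖ ^ 2 = Quaternion.normSq q := by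
      rw [sq, ← Quaternion.normSq_eq_norm_mul_self]
    have h2 : ‖q.im‖ ^ 2 = Quaternion.normSq q.im := by
      rw [sq, ← Quaternion.normSq_eq_norm_mul_self]
    rw [h1, h2]
    rw [Quaternion.normSq_def', Quaternion.normSq_def']
    simp [Quaternion.normSq_def', Quaternion.im, QuaternionAlgebra.im]
    ring
  by_cases him : q.im = 0
  · -- q is real
    have hqre : (q.re : ℍ[ℝ]) = q := by
      conv_rhs => rw [← q.re_add_im, him, add_zero]
    rcases lt_or_gt_of_ne (fun h : q.re = 0 => hq (by rw [← hqre, h]; simp)) with hneg | hpos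
    · -- q.re < 0 : use p = log(-q.re) + π i
      refine ⟨(Real.log (-q.re) : ℝ) + (Real.pi : ℝ) • qi, ?_⟩
      rw [Quaternion.exp_eq]
      have hre : ((Real.log (-q.re) : ℝ) + (Real.pi : ℝ) • qi).re
          = Real.log (-q.re) := by simp [Quaternion.re_smul]; simp [qi]
      have him' : ((Real.log (-q.re) : ℝ) + (Real.pi : ℝ) • qi).im
          = (Real.pi : ℝ) • qi := by
        ext <;> simp [Quaternion.im, QuaternionAlgebra.im] <;> simp [qi]
      have hnorm : ‖(Real.pi : ℝ) • qi‖ = Real.pi := by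
        rw [norm_smul]
        have h1 : Quaternion.normSq qi = 1 := by
          rw [Quaternion.normSq_def']; simp [qi]
        have h2 := Quaternion.normSq_eq_norm_mul_self qi
        have h3 : ‖qi‖ = 1 := by nlinarith [norm_nonneg qi]
        rw [h3, mul_one, Real.norm_eq_abs, abs_of_pos Real.pi_pos]
      rw [hre, him', hnorm, Real.cos_pi, Real.sin_pi, ← Real.exp_eq_exp_ℝ, Real.exp_log (by linarith)]
      rw [← hqre]
      push_cast
      rw [zero_div, zero_smul, add_zero]
      norm_num
      rw [← Quaternion.coe_mul_eq_smul, mul_one]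
    · exact ⟨(Real.log q.re : ℍ[ℝ]), by
        rw [Quaternion.exp_coe, ← Real.exp_eq_exp_ℝ, Real.exp_log hpos, hqre]⟩
  · -- q.im ≠ 0
    have himn : (0:ℝ) < ‖q.im‖ := norm_pos_iff.mpr him
    set a : ℝ := q.re / ‖q‖ with ha
    have ha1 : -1 ≤ a := by
      rw [ha, le_div_iff₀ hr]
      nlinarith [sq_nonneg (q.re + ‖q‖)]
    have ha2 : a ≤ 1 := by
      rw [ha, div_le_iff₀ hr]
      nlinarith [sq_nonneg (q.re - ‖q‖)]
    set θ : ℝ := Real.arccos a with hθ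
    have hcos : Real.cos θ = a := Real.cos_arccos ha1 ha2
    have hsin : Real.sin θ = ‖q.im‖ / ‖q‖ := by
      rw [hθ, Real.sin_arccos]
      have : 1 - a ^ 2 = (‖q.im‖ / ‖q‖) ^ 2 := by
        rw [ha]
        field_simp
        nlinarith
      rw [this, Real.sqrt_sq (by positivity)]
    have hθpos : 0 < θ := by
      by_contra h
      push_neg at h
      have : θ = 0 := le_antisymm h (Real.arccos_nonneg a)
      rw [this, Real.sin_zero] at hsin
      have := hsin.symm
      rw [div_eq_zero_iff] at this
      rcases this with h' | h' <;> linarith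
    refine ⟨(Real.log ‖q‖ : ℝ) + (θ / ‖q.im‖) • q.im, ?_⟩
    rw [Quaternion.exp_eq]
    have hre : ((Real.log ‖q‖ : ℝ) + (θ / ‖q.im‖) • q.im : ℍ[ℝ]).re = Real.log ‖q‖ := by
      simp
    have him' : ((Real.log ‖q‖ : ℝ) + (θ / ‖q.im‖) • q.im : ℍ[ℝ]).im
        = (θ / ‖q.im‖) • q.im := by
      ext <;> simp
    have hnorm : ‖(θ / ‖q.im‖) • q.im‖ = θ := by
      rw [norm_smul, Real.norm_eq_abs, abs_of_pos (by positivity),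
        div_mul_cancel₀ _ (ne_of_gt himn)]
    rw [hre, him', hnorm, hcos, hsin, ← Real.exp_eq_exp_ℝ, Real.exp_log hr, smul_smul]
    have : ‖q.im‖ / ‖q‖ / θ * (θ / ‖q.im‖) = 1 / ‖q‖ := by
      field_simp
    rw [this, ha]
    have hcoe : ((q.re / ‖q‖ : ℝ) : ℍ[ℝ]) = (1 / ‖q‖) • (q.re : ℍ[ℝ]) := by
      have hx : q.re / ‖q‖ = (1 / ‖q‖) * q.re := by ring
      rw [hx, Quaternion.coe_mul, Quaternion.coe_mul_eq_smul]
    rw [hcoe, ← smul_add, smul_smul, mul_one_div, div_self (ne_of_gt hr), one_smul, q.re_add_im]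
end
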